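/- The formal power series g(z) = Σ_{n≥1} (5·(3n+1)!/((n−1)!·(2n+3)!))·z^n satisfies z³·g³ + 5z²·g² + (5z − 1)·g + z = 0. -/

import Mathlib

open Nat PowerSeries Finset

noncomputable def tt : ℕ → ℚ
  | 0 => 1
  | n + 1 =>
    ∑ p ∈ (Finset.HasAntidiagonal.antidiagonal n).attach,
      (∑ q ∈ (Finset.HasAntidiagonal.antidiagonal p.1.1).attach, tt q.1.1 * tt q.1.2) * tt p.1.2
decreasing_by
  all_goals
    first
    | (have hq := q.2; have hp := p.2;
       rw [Finset.HasAntidiagonal.mem_antidiagonal] at hq hp <;> omega)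
    | (have hp := p.2; rw [Finset.HasAntidiagonal.mem_antidiagonal] at hp; omega)

noncomputable def Tser : PowerSeries ℚ := PowerSeries.mk tt

lemma hT : Tser = 1 + X * Tser ^ 3 := by
  ext n
  cases n with
  | zero => simp [Tser, tt, PowerSeries.coeff_mk]
  | succ n =>
    rw [map_add, PowerSeries.coeff_succ_X_mul]
    have h1 : (PowerSeries.coeff (n+1)) (1 : PowerSeries ℚ) = 0 := by
      simp
    rw [h1, zero_add]
    have : Tser ^ 3 = Tser * Tser * Tser := by ring
    rw [this, PowerSeries.coeff_mul]
    rw [show (PowerSeries.coeff (n+1)) Tser = tt (n+1) from PowerSeries.coeff_mk _ _]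
    conv_lhs => rw [tt]
    rw [
      Finset.sum_attach (Finset.HasAntidiagonal.antidiagonal n)
        (fun p => (∑ q ∈ (Finset.HasAntidiagonal.antidiagonal p.1).attach, tt q.1.1 * tt q.1.2) * tt p.2)]
    refine Finset.sum_congr rfl fun p _ => ?_
    rw [PowerSeries.coeff_mul,
      Finset.sum_attach (Finset.HasAntidiagonal.antidiagonal p.1) (fun q => tt q.1 * tt q.2)]
    simp [Tser, PowerSeries.coeff_mk]

lemma hconst : constantCoeff Tser = 1 := by
  simp [Tser, tt]

noncomputable abbrev DD : PowerSeries ℚ → PowerSeries ℚ := fun f => d⁄dX ℚ f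

lemma Dnum (n : ℕ) [n.AtLeastTwo] :
    (d⁄dX ℚ) (OfNat.ofNat n : PowerSeries ℚ) = 0 := by
  have h1 : (OfNat.ofNat n : PowerSeries ℚ) = algebraMap ℚ (PowerSeries ℚ) (OfNat.ofNat n) :=
    (map_ofNat _ n).symm
  rw [h1, Derivation.map_algebraMap]

lemma Dcast (n : ℕ) : (d⁄dX ℚ) ((n : PowerSeries ℚ)) = 0 := by
  have h1 : ((n : PowerSeries ℚ)) = algebraMap ℚ (PowerSeries ℚ) n := by push_cast; rfl
  rw [h1, Derivation.map_algebraMap]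

lemma e1 : X * Tser ^ 3 = Tser - 1 := by linear_combination -hT

lemma e2 : (DD Tser) * (1 - 3*X*Tser^2) = Tser^3 := by
  have h := congrArg (d⁄dX ℚ) hT
  simp only [map_add, Derivation.map_one_eq_zero, Derivation.leibniz,
    Derivation.leibniz_pow, derivative_X, smul_eq_mul, nsmul_eq_mul] at h
  push_cast at h
  linear_combination h

lemma e3 : (DD (DD Tser)) * (1 - 3*X*Tser^2)
    = 6*Tser^2*(DD Tser) + 6*X*Tser*(DD Tser)^2 := by
  have h := congrArg (d⁄dX ℚ) e2
  simp only [map_add, map_sub, map_mul, map_one, Derivation.map_one_eq_zero,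
    Derivation.leibniz, Derivation.leibniz_pow, derivative_X, smul_eq_mul,
    nsmul_eq_mul, Dnum 2, Dnum 3, Dnum 4, Dnum 5, Dnum 6, Dcast] at h
  push_cast at h
  linear_combination h

lemma e4 : (DD (DD (DD Tser))) * (1 - 3*X*Tser^2)
    = 9*Tser^2*(DD (DD Tser)) + 18*Tser*(DD Tser)^2 + 6*X*(DD Tser)^3
      + 18*X*Tser*(DD Tser)*(DD (DD Tser)) := by
  have h := congrArg (d⁄dX ℚ) e3
  simp only [map_add, map_sub, map_mul, map_one, Derivation.map_one_eq_zero,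
    Derivation.leibniz, Derivation.leibniz_pow, derivative_X, smul_eq_mul,
    nsmul_eq_mul, Dnum 2, Dnum 3, Dnum 4, Dnum 5, Dnum 6, Dcast] at h
  push_cast at h
  linear_combination h

lemma hWne : (1 - 3*X*Tser^2 : PowerSeries ℚ) ≠ 0 := by
  intro h
  have := congrArg constantCoeff h
  simp [constantCoeff_X] at this

lemma hTne : (Tser : PowerSeries ℚ) ≠ 0 := by
  intro h
  have := congrArg constantCoeff h
  rw [hconst] at this
  simp at this

lemma hd1 : DD (X*Tser^5) = (Tser^5 + 5*X*Tser^4*(DD Tser)) := by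
  simp only [Derivation.leibniz, Derivation.leibniz_pow, derivative_X, smul_eq_mul,
    nsmul_eq_mul]
  push_cast
  ring

lemma hd2 : DD ((Tser^5 + 5*X*Tser^4*(DD Tser))) = (10*Tser^4*(DD Tser) + 20*X*Tser^3*(DD Tser)^2 + 5*X*Tser^4*(DD (DD Tser))) := by
  simp only [map_add, Derivation.leibniz, Derivation.leibniz_pow, derivative_X, smul_eq_mul,
    nsmul_eq_mul, Dnum 5]
  push_cast
  ring

lemma hd3 : DD ((10*Tser^4*(DD Tser) + 20*X*Tser^3*(DD Tser)^2 + 5*X*Tser^4*(DD (DD Tser)))) = (60*Tser^3*(DD Tser)^2 + 15*Tser^4*(DD (DD Tser)) + 60*X*Tser^2*(DD Tser)^3 + 60*X*Tser^3*(DD Tser)*(DD (DD Tser)) + 5*X*Tser^4*(DD (DD (DD Tser)))) := by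
  simp only [map_add, Derivation.leibniz, Derivation.leibniz_pow, derivative_X, smul_eq_mul,
    nsmul_eq_mul, Dnum 5, Dnum 10, Dnum 20]
  push_cast
  ring

lemma keyP : ((210*X^2*Tser^4*(DD Tser) - 210*X^2*Tser^5 + 600*X^3*Tser^3*(DD Tser)^2 + 150*X^3*Tser^4*(DD (DD Tser)) - 2550*X^3*Tser^4*(DD Tser) + 240*X^4*Tser^2*(DD Tser)^3 + 240*X^4*Tser^3*(DD Tser)*(DD (DD Tser)) - 4860*X^4*Tser^3*(DD Tser)^2 + 20*X^4*Tser^4*(DD (DD (DD Tser))) - 1215*X^4*Tser^4*(DD (DD Tser)) - 1620*X^5*Tser^2*(DD Tser)^3 - 1620*X^5*Tser^3*(DD Tser)*(DD (DD Tser)) - 135*X^5*Tser^4*(DD (DD (DD Tser))))) * (1 - 3*X*Tser^2)^5 = 0 := by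
  linear_combination ((20*X^4*Tser^4 - 135*X^5*Tser^4 - 240*X^5*Tser^6 + 1620*X^6*Tser^6 + 1080*X^6*Tser^8 - 7290*X^7*Tser^8 - 2160*X^7*Tser^10 + 14580*X^8*Tser^10 + 1620*X^8*Tser^12 - 10935*X^9*Tser^12)) * e4 + ((150*X^3*Tser^4 + 240*X^4*Tser^3*(DD Tser) - 1215*X^4*Tser^4 - 1620*X^4*Tser^6 - 1620*X^5*Tser^3*(DD Tser) - 2520*X^5*Tser^5*(DD Tser) + 13365*X^5*Tser^6 + 6480*X^5*Tser^8 + 17010*X^6*Tser^5*(DD Tser) + 9720*X^6*Tser^7*(DD Tser) - 54675*X^6*Tser^8 - 11340*X^6*Tser^10 - 65610*X^7*Tser^7*(DD Tser) - 16200*X^7*Tser^9*(DD Tser) + 98415*X^7*Tser^10 + 7290*X^7*Tser^12 + 109350*X^8*Tser^9*(DD Tser) + 9720*X^8*Tser^11*(DD Tser) - 65610*X^8*Tser^12 - 65610*X^9*Tser^11*(DD Tser))) * e3 + ((210*X^2*Tser^4 + 600*X^3*Tser^3*(DD Tser) - 2550*X^3*Tser^4 - 1020*X^3*Tser^6 +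 240*X^4*Tser^2*(DD Tser)^2 - 4860*X^4*Tser^3*(DD Tser) - 4260*X^4*Tser^5*(DD Tser) + 18450*X^4*Tser^6 + 1860*X^4*Tser^8 - 1620*X^5*Tser^2*(DD Tser)^2 - 1320*X^5*Tser^4*(DD Tser)^2 + 37260*X^5*Tser^5*(DD Tser) + 10740*X^5*Tser^7*(DD Tser) - 56700*X^5*Tser^8 - 1500*X^5*Tser^10 + 8910*X^6*Tser^4*(DD Tser)^2 + 1080*X^6*Tser^6*(DD Tser)^2 - 105300*X^6*Tser^7*(DD Tser) - 12060*X^6*Tser^9*(DD Tser) + 85050*X^6*Tser^10 + 450*X^6*Tser^12 - 7290*X^7*Tser^6*(DD Tser)^2 + 3240*X^7*Tser^8*(DD Tser)^2 + 136080*X^7*Tser^9*(DD Tser) + 5940*X^7*Tser^11*(DD Tser) - 51030*X^7*Tser^12 - 21870*X^8*Tser^8*(DD Tser)^2 - 3240*X^8*Tser^10*(DD Tser)^2 - 72900*X^8*Tser^11*(DD Tser) + 21870*X^9*Tser^10*(DD Tser)^2)) * e2 + ((-210*X^2*Tser^5 - 210*X^2*Tser^6 + 600*X^3*Tser^7 +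 810*X^3*Tser^8 - 450*X^4*Tser^9 - 1050*X^4*Tser^10 + 450*X^5*Tser^12)) * e1

lemma P0 : ((210*X^2*Tser^4*(DD Tser) - 210*X^2*Tser^5 + 600*X^3*Tser^3*(DD Tser)^2 + 150*X^3*Tser^4*(DD (DD Tser)) - 2550*X^3*Tser^4*(DD Tser) + 240*X^4*Tser^2*(DD Tser)^3 + 240*X^4*Tser^3*(DD Tser)*(DD (DD Tser)) - 4860*X^4*Tser^3*(DD Tser)^2 + 20*X^4*Tser^4*(DD (DD (DD Tser))) - 1215*X^4*Tser^4*(DD (DD Tser)) - 1620*X^5*Tser^2*(DD Tser)^3 - 1620*X^5*Tser^3*(DD Tser)*(DD (DD Tser)) - 135*X^5*Tser^4*(DD (DD (DD Tser))))) = 0 :=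
  (mul_eq_zero.mp keyP).resolve_right (pow_ne_zero _ hWne)

lemma odeT : ((4:PowerSeries ℚ)*X^3 - 27*X^4) * (DD (DD (DD (X*Tser^5))))
    + (18*X^2 - 162*X^3) * (DD (DD (X*Tser^5)))
    + (6*X - 186*X^2) * (DD (X*Tser^5)) - (6 + 24*X) * (X*Tser^5) = 0 := by
  rw [hd1, hd2, hd3]
  linear_combination P0

lemma keyC : (X^3*(X*Tser^5)^3 + 5*X^2*(X*Tser^5)^2 + (5*X-1)*(X*Tser^5) + X) * Tser^3 = 0 := by
  linear_combination ((X*Tser^3 + X*Tser^4 + X*Tser^5 + X*Tser^6 + X*Tser^7 - X^2*Tser^6 - 2*X^2*Tser^7 + 2*X^2*Tser^8 + X^2*Tser^9 + X^3*Tser^9 + 3*X^3*Tser^10 + X^3*Tser^11 - X^4*Tser^12 + X^4*Tser^13 + X^5*Tser^15)) * e1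

lemma cubic0 : X^3*(X*Tser^5)^3 + 5*X^2*(X*Tser^5)^2 + (5*X-1)*(X*Tser^5) + X = 0 :=
  (mul_eq_zero.mp keyC).resolve_right (pow_ne_zero _ hTne)

noncomputable def hser : PowerSeries ℚ := X * Tser^5
noncomputable def hc : ℕ → ℚ := fun n => PowerSeries.coeff n hser

lemma ode_smul : (4:ℚ) • (X^3 * DD (DD (DD hser))) - (27:ℚ) • (X^4 * DD (DD (DD hser)))
    + (18:ℚ) • (X^2 * DD (DD hser)) - (162:ℚ) • (X^3 * DD (DD hser))
    + (6:ℚ) • (X^1 * DD hser) - (186:ℚ) • (X^2 * DD hser)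
    - (6:ℚ) • hser - (24:ℚ) • (X^1 * hser) = 0 := by
  simp only [smul_eq_C_mul, map_ofNat, hser]
  linear_combination odeT

lemma hrec (n : ℕ) :
    (2*(n+3)*(n+5)*(2*n+11) : ℚ) * hc (n+4) = (3*(n+4)*(3*n+11)*(3*n+13) : ℚ) * hc (n+3) := by
  have h := congrArg (PowerSeries.coeff (n+4)) ode_smul
  simp only [map_sub, map_add, map_smul, map_zero, smul_eq_mul, coeff_X_pow_mul',
    show (1:ℕ) ≤ n+4 from by omega, show (2:ℕ) ≤ n+4 from by omega,
    show (3:ℕ) ≤ n+4 from by omega, show (4:ℕ) ≤ n+4 from by omega,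
    if_true, coeff_derivative, show n+4-3 = n+1 from rfl, show n+4-2 = n+2 from rfl,
    show n+1+1 = n+2 from rfl, show n+2+1 = n+3 from rfl, show n+3+1 = n+4 from rfl] at h
  norm_num at h
  simp only [hc]
  push_cast
  linear_combination h

lemma hrec2 : (42 : ℚ) * hc 2 = 210 * hc 1 := by
  have h := congrArg (PowerSeries.coeff 2) ode_smul
  simp only [map_sub, map_add, map_smul, map_zero, smul_eq_mul, coeff_X_pow_mul',
    coeff_derivative] at h
  norm_num at h
  simp only [hc]
  linear_combination h

lemma hrec3 : (144 : ℚ) * hc 3 = 720 * hc 2 := by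
  have h := congrArg (PowerSeries.coeff 3) ode_smul
  simp only [map_sub, map_add, map_smul, map_zero, smul_eq_mul, coeff_X_pow_mul',
    coeff_derivative] at h
  norm_num at h
  simp only [hc]
  linear_combination h

lemma hrecall (n : ℕ) :
    (2*(n+1)*(n+3)*(2*n+7) : ℚ) * hc (n+2) = (3*(n+2)*(3*n+5)*(3*n+7) : ℚ) * hc (n+1) := by
  match n with
  | 0 => norm_num; linear_combination hrec2
  | 1 => norm_num; linear_combination hrec3
  | (k+2) =>
    have h := hrec k
    push_cast at h ⊢
    linear_combination h

noncomputable def gc : ℕ → ℚ := fun n =>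
  if n = 0 then 0 else (5 * (3 * n + 1)! : ℚ) / ((n - 1)! * (2 * n + 3)!)

lemma grec (n : ℕ) :
    (2*(n+1)*(n+3)*(2*n+7) : ℚ) * gc (n+2) = (3*(n+2)*(3*n+5)*(3*n+7) : ℚ) * gc (n+1) := by
  simp only [gc, if_neg (by omega : ¬ n+2 = 0), if_neg (by omega : ¬ n+1 = 0)]
  rw [show 3*(n+2)+1 = 3*n+7 from by ring, show (n+2-1) = n+1 from rfl,
      show 2*(n+2)+3 = 2*n+7 from by ring, show 3*(n+1)+1 = 3*n+4 from by ring,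
      show (n+1-1) = n from rfl, show 2*(n+1)+3 = 2*n+5 from by ring]
  rw [show (3*n+7)! = (3*n+7)*((3*n+6)*((3*n+5)*(3*n+4)!)) from by
        rw [show 3*n+7 = (3*n+6)+1 from rfl, Nat.factorial_succ,
            show 3*n+6 = (3*n+5)+1 from rfl, Nat.factorial_succ,
            show 3*n+5 = (3*n+4)+1 from rfl, Nat.factorial_succ],
      show (2*n+7)! = (2*n+7)*((2*n+6)*(2*n+5)!) from by
        rw [show 2*n+7 = (2*n+6)+1 from rfl, Nat.factorial_succ,
            show 2*n+6 = (2*n+5)+1 from rfl, Nat.factorial_succ],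
      show (n+1)! = (n+1)*(n !) from Nat.factorial_succ n]
  have h1 : ((3*n+4)! : ℚ) ≠ 0 := Nat.cast_ne_zero.mpr (Nat.factorial_ne_zero _)
  have h2 : ((2*n+5)! : ℚ) ≠ 0 := Nat.cast_ne_zero.mpr (Nat.factorial_ne_zero _)
  have h3 : ((n !) : ℚ) ≠ 0 := Nat.cast_ne_zero.mpr (Nat.factorial_ne_zero _)
  have h4 : ((n:ℚ)+1) ≠ 0 := by positivity
  have h5 : (2*(n:ℚ)+7) ≠ 0 := by positivity
  have h6 : (2*(n:ℚ)+6) ≠ 0 := by positivity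
  push_cast
  field_simp
  ring

lemma base0 : gc 0 = hc 0 := by
  simp [gc, hc, hser]

lemma base1 : gc 1 = hc 1 := by
  have h1 : hc 1 = 1 := by
    simp only [hc, hser]
    rw [show (PowerSeries.coeff 1) (X*Tser^5) = (PowerSeries.coeff (0+1)) (X*Tser^5) from rfl,
      coeff_succ_X_mul, coeff_zero_eq_constantCoeff, map_pow, hconst]
    norm_num
  rw [h1]
  simp only [gc, if_neg (one_ne_zero)]
  norm_num [show 3*1+1 = 4 from rfl, show 1-1 = 0 from rfl, show 2*1+3 = 5 from rfl,
    show (4:ℕ)! = 24 from rfl, show (0:ℕ)! = 1 from rfl, show (5:ℕ)! = 120 from rfl]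

lemma coefeq : ∀ n, gc n = hc n := by
  intro n
  induction n with
  | zero => exact base0
  | succ m ih =>
    match m, ih with
    | 0, _ => exact base1
    | (k+1), ih =>
      have h1 := grec k
      have h2 := hrecall k
      have ha : (2*((k:ℚ))+2)*((k:ℚ)+3)*(2*(k:ℚ)+7) ≠ 0 := by positivity
      have ha' : (2*((k:ℚ)+1)*((k:ℚ)+3)*(2*(k:ℚ)+7)) ≠ 0 := by
        push_cast; intro hz; exact ha (by linear_combination hz)
      apply mul_left_cancel₀ ha'
      rw [show k+1+1 = k+2 from rfl]
      push_cast at h1 h2 ⊢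
      calc 2*((k:ℚ)+1)*((k:ℚ)+3)*(2*(k:ℚ)+7) * gc (k+2)
          = 3*((k:ℚ)+2)*(3*(k:ℚ)+5)*(3*(k:ℚ)+7) * gc (k+1) := by linear_combination h1
        _ = 3*((k:ℚ)+2)*(3*(k:ℚ)+5)*(3*(k:ℚ)+7) * hc (k+1) := by rw [ih]
        _ = 2*((k:ℚ)+1)*((k:ℚ)+3)*(2*(k:ℚ)+7) * hc (k+2) := by linear_combination -h2

lemma gmk : (PowerSeries.mk fun n =>
      if n = 0 then (0:ℚ) else (5 * (3 * n + 1)! : ℚ) / ((n - 1)! * (2 * n + 3)!))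
    = X * Tser ^ 5 := by
  ext n
  rw [PowerSeries.coeff_mk]
  exact coefeq n

theorem stmt_5 :
    let g : PowerSeries ℚ :=
      PowerSeries.mk fun n =>
        if n = 0 then 0 else (5 * (3 * n + 1)! : ℚ) / ((n - 1)! * (2 * n + 3)!)
    X ^ 3 * g ^ 3 + 5 * X ^ 2 * g ^ 2 + (5 * X - 1) * g + X = 0 := by
  intro g
  show X ^ 3 * g ^ 3 + 5 * X ^ 2 * g ^ 2 + (5 * X - 1) * g + X = 0
  rw [show g = X * Tser ^ 5 from gmk]
  linear_combination cubic0
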